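/- Let f be μ-strongly convex and L-smooth, α = μ/L, x_{k+1} = x_k − (1/L)∇f(x_k), and φ*_{k+1} = (1−α)(φ*_k + α(μ/2)‖v_k − x_k^{++}‖²) + α(f(x_k) − (1/(2μ))‖∇f(x_k)‖²) where x_k^{++} = x_k − (1/μ)∇f(x_k). Then f(x_{k+1}) − φ*_{k+1} ≤ (1−μ/L)(f(x_k) − φ*_k). -/

import Mathlib

open scoped InnerProductSpace

/-- per-iteration contraction of SUESA with α = μ/L. -/
theorem suesa_contraction {n : ℕ}
    (f : EuclideanSpace ℝ (Fin n) → ℝ)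
    (g : EuclideanSpace ℝ (Fin n) → EuclideanSpace ℝ (Fin n))  -- gradient of f
    (μ L : ℝ) (hμ : 0 < μ) (hμL : μ ≤ L)
    (hsc : ∀ x y, f y + ⟪g y, x - y⟫_ℝ + μ / 2 * ‖x - y‖ ^ 2 ≤ f x)
    (hsm : ∀ x y, f x ≤ f y + ⟪g y, x - y⟫_ℝ + L / 2 * ‖x - y‖ ^ 2)
    (xk vk : EuclideanSpace ℝ (Fin n)) (φk : ℝ) :
    f (xk - (1 / L) • g xk)
      - ((1 - μ / L) * (φk + (μ / L) * (μ / 2) * ‖vk - (xk - (1 / μ) • g xk)‖ ^ 2)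
          + (μ / L) * (f xk - 1 / (2 * μ) * ‖g xk‖ ^ 2))
    ≤ (1 - μ / L) * (f xk - φk) := by
  have hL : 0 < L := lt_of_lt_of_le hμ hμL
  have key := hsm (xk - (1 / L) • g xk) xk
  have h1 : (xk - (1 / L) • g xk) - xk = -((1 / L) • g xk) := by abel
  rw [h1] at key
  rw [inner_neg_right, real_inner_smul_right, real_inner_self_eq_norm_sq, norm_neg,
    norm_smul] at key
  have habs : |1 / L| = 1 / L := abs_of_pos (by positivity)
  rw [Real.norm_eq_abs, habs] at key
  have key' : f (xk - (1 / L) • g xk) ≤ f xk - 1 / (2 * L) * ‖g xk‖ ^ 2 := by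
    have h2 : L / 2 * (1 / L * ‖g xk‖) ^ 2 = 1 / (2 * L) * ‖g xk‖ ^ 2 := by
      field_simp
    rw [h2] at key
    have h4 : -(1 / L * ‖g xk‖ ^ 2) + 1 / (2 * L) * ‖g xk‖ ^ 2
        = -(1 / (2 * L) * ‖g xk‖ ^ 2) := by field_simp; ring
    linarith
  have hα : (μ / L) * (1 / (2 * μ) * ‖g xk‖ ^ 2) = 1 / (2 * L) * ‖g xk‖ ^ 2 := by
    field_simp
  have hnn : 0 ≤ ‖vk - (xk - (1 / μ) • g xk)‖ ^ 2 := by positivity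
  have hαle : μ / L ≤ 1 := (div_le_one hL).2 hμL
  have hαpos : 0 < μ / L := by positivity
  have h3 : 0 ≤ (1 - μ / L) * ((μ / L) * (μ / 2) * ‖vk - (xk - (1 / μ) • g xk)‖ ^ 2) := by
    apply mul_nonneg (by linarith); positivity
  nlinarith [key', hα, h3]
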